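/- Let A₁A₂B₁B₂ and A₁'A₂'B₁B₂ be two ultraparallel hyperbolic trapezoids over the same lower edge B₁B₂, with lateral heights related by tanh h₁' = e^{-t}·tanh h₁ and tanh h₂' = e^{-t}·tanh h₂ for some t > 0. Let h₀ denote the distance between the lines A₁A₂ and B₁B₂, and suppose h₀ ≥ m and h₁, h₂ ≤ M for fixed constants 0 < m < M. Then as t → 0, the ratio of upper edge lengths l₁₂/l₁₂' converges to 1 uniformly over all such pairs of trapezoids; moreover when the trapezoid degenerates (lower edge length a₁₂ → 0), the ratio l₁₂/l₁₂' extends continuously with limit cosh²h₁ · cosh h₀' / (cosh²h₁' · cosh h₀). -/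

import Mathlib

open Real

/-! Hyperboloid model of the hyperbolic plane `H²` of curvature `-1`:
points are `p : ℝ × ℝ × ℝ` with `mink p p = 1` and `p.1 > 0`, where `mink` is the
Minkowski bilinear form of signature `(+,-,-)`.  Distances satisfy
`cosh (hdist p q) = mink p q` and angles are computed by the hyperbolic cosine law. -/

/-- Minkowski bilinear form on `ℝ^{1,2}`. -/
def mink (p q : ℝ × ℝ × ℝ) : ℝ := p.1 * q.1 - p.2.1 * q.2.1 - p.2.2 * q.2.2

/-- Inverse hyperbolic cosine. -/
noncomputable def arcosh (x : ℝ) : ℝ := Real.log (x + Real.sqrt (x ^ 2 - 1))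

/-- Hyperbolic distance between points of the hyperboloid. -/
noncomputable def hdist (p q : ℝ × ℝ × ℝ) : ℝ := _root_.arcosh (mink p q)

/-- Angle at `p` between the geodesic segments from `p` to `q` and from `p` to `r`. -/
noncomputable def hangle (p q r : ℝ × ℝ × ℝ) : ℝ :=
  Real.arccos ((mink p q * mink p r - mink q r) /
    (Real.sqrt (mink p q ^ 2 - 1) * Real.sqrt (mink p r ^ 2 - 1)))

/-- The point at signed arclength `s` along the base geodesic line `{x₂ = 0}` (the "lower
line"), moved to (signed) height `h` along the perpendicular at that point. -/
noncomputable def Pt (s h : ℝ) : ℝ × ℝ × ℝ :=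
  (Real.cosh s * Real.cosh h, Real.sinh s * Real.cosh h, Real.sinh h)

/-- Inverse hyperbolic tangent. -/
noncomputable def artanh (x : ℝ) : ℝ := Real.log ((1 + x) / (1 - x)) / 2

/-- The point at arclength `σ` along the upper line, which is ultraparallel to the base
line `{x₂ = 0}` at distance `h₀` (the common perpendicular meeting it at `σ = 0`). -/
noncomputable def U (h₀ σ : ℝ) : ℝ × ℝ × ℝ :=
  (Real.cosh σ * Real.cosh h₀, Real.sinh σ, Real.cosh σ * Real.sinh h₀)

/-- The height (distance to the base line) of the point `U h₀ σ`. -/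
noncomputable def htOf (h₀ σ : ℝ) : ℝ := Real.arsinh (Real.cosh σ * Real.sinh h₀)

/-- The base-line arclength of the foot of the perpendicular from `U h₀ σ`. -/
noncomputable def ftOf (h₀ σ : ℝ) : ℝ :=
  Real.arsinh (Real.sinh σ / Real.cosh (htOf h₀ σ))

/-- The hyperbolic homothety towards the base line: heights transform by
`tanh h ↦ e^{-t} tanh h`. -/
noncomputable def shrink (t h : ℝ) : ℝ := _root_.artanh (Real.exp (-t) * Real.tanh h)

/-- The upper edge length `l₁₂'` of the primed trapezoid `A₁'A₂'B₁B₂`, whose upper vertices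
`Aᵢ' ` lie over the same feet as `Aᵢ = U h₀ σᵢ` at heights `hᵢ'` with
`tanh hᵢ' = e^{-t} tanh hᵢ`.  (The upper edge length of the unprimed trapezoid is
`l₁₂ = |σ₁ - σ₂|`.) -/
noncomputable def lPrime (t h₀ σ₁ σ₂ : ℝ) : ℝ :=
  hdist (Pt (ftOf h₀ σ₁) (shrink t (htOf h₀ σ₁))) (Pt (ftOf h₀ σ₂) (shrink t (htOf h₀ σ₂)))

/-- The ratio `rat = l₁₂ / l₁₂'` of the upper edge lengths. -/
noncomputable def rat (t h₀ σ₁ σ₂ : ℝ) : ℝ := |σ₁ - σ₂| / lPrime t h₀ σ₁ σ₂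

set_option maxHeartbeats 1000000

lemma sq_eq_of_nonneg {a b : ℝ} (ha : 0 ≤ a) (hb : 0 ≤ b) (h : a^2 = b^2) : a = b := by
  nlinarith [sq_nonneg (a - b), sq_nonneg (a + b)]

lemma my_sinh_abs (x : ℝ) : Real.sinh |x| = |Real.sinh x| := by
  rcases le_or_gt 0 x with h | h
  · rw [abs_of_nonneg h, abs_of_nonneg (Real.sinh_nonneg_iff.mpr h)]
  · rw [abs_of_neg h, abs_of_neg (by simpa using Real.sinh_lt_sinh.mpr h), Real.sinh_neg]

lemma arcosh_cosh (x : ℝ) : _root_.arcosh (Real.cosh x) = |x| := by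
  unfold _root_.arcosh
  rw [show Real.cosh x ^ 2 - 1 = Real.sinh x ^ 2 by rw [Real.cosh_sq]; ring,
    Real.sqrt_sq_eq_abs, ← my_sinh_abs, ← Real.cosh_abs x, Real.cosh_add_sinh, Real.log_exp]

lemma exp_sq_artanh {y : ℝ} (hy : y ^ 2 < 1) : Real.exp (_root_.artanh y) ^ 2 = (1 + y) / (1 - y) := by
  have h1 : (0:ℝ) < 1 + y := by nlinarith
  have h2 : (0:ℝ) < 1 - y := by nlinarith
  unfold _root_.artanh
  rw [sq, ← Real.exp_add]
  rw [show Real.log ((1+y)/(1-y)) / 2 + Real.log ((1+y)/(1-y)) / 2 = Real.log ((1+y)/(1-y)) by ring]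
  exact Real.exp_log (by positivity)

lemma sinh_artanh {y : ℝ} (hy : y ^ 2 < 1) :
    Real.sinh (_root_.artanh y) = y * Real.cosh (_root_.artanh y) := by
  have h2 : (0:ℝ) < 1 - y := by nlinarith
  have hu : 0 < Real.exp (_root_.artanh y) := Real.exp_pos _
  have hu2 := exp_sq_artanh hy
  rw [Real.sinh_eq, Real.cosh_eq, Real.exp_neg]
  field_simp at hu2 ⊢
  nlinarith [hu2]

lemma cosh_artanh {y : ℝ} (hy : y ^ 2 < 1) :
    Real.cosh (_root_.artanh y) = 1 / Real.sqrt (1 - y ^ 2) := by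
  have h2 : (0:ℝ) < 1 - y ^ 2 := by nlinarith
  have hc := Real.cosh_sq (_root_.artanh y)
  have hs := sinh_artanh hy
  have hcp := Real.cosh_pos (_root_.artanh y)
  have hc2 : Real.cosh (_root_.artanh y) ^ 2 = (y * Real.cosh (_root_.artanh y)) ^ 2 + 1 := by
    rw [← hs]; exact hc
  have key : Real.cosh (_root_.artanh y) ^ 2 * (1 - y ^ 2) = 1 := by linear_combination hc2
  apply sq_eq_of_nonneg hcp.le (by positivity)
  rw [div_pow, one_pow, Real.sq_sqrt h2.le]
  field_simp
  nlinarith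

lemma k_nonneg {t : ℝ} (ht : 0 ≤ t) : 0 ≤ 1 - Real.exp (-t) ^ 2 := by
  have h1 : Real.exp (-t) ≤ 1 := Real.exp_le_one_iff.mpr (by linarith)
  have h2 : 0 < Real.exp (-t) := Real.exp_pos _
  nlinarith

lemma one_add_k_mul_sq_pos {t : ℝ} (ht : 0 ≤ t) (z : ℝ) :
    0 < 1 + (1 - Real.exp (-t) ^ 2) * z ^ 2 := by
  nlinarith [mul_nonneg (k_nonneg ht) (sq_nonneg z)]

lemma tanh_sq_lt_one (x : ℝ) : Real.tanh x ^ 2 < 1 := by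
  rw [Real.tanh_eq_sinh_div_cosh, div_pow, div_lt_one (by positivity)]
  nlinarith [Real.cosh_sq x]

lemma shrink_sq_lt_one (ht : 0 ≤ t) (x : ℝ) : (Real.exp (-t) * Real.tanh x) ^ 2 < 1 := by
  have h1 : Real.exp (-t) ≤ 1 := Real.exp_le_one_iff.mpr (by linarith)
  have h2 : 0 < Real.exp (-t) := Real.exp_pos _
  nlinarith [_root_.tanh_sq_lt_one x, mul_nonneg (k_nonneg ht) (sq_nonneg (Real.tanh x)), mul_pos h2 h2]

lemma cosh_shrink (ht : 0 ≤ t) (x : ℝ) :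
    Real.cosh (shrink t x) =
      Real.cosh x / Real.sqrt (1 + (1 - Real.exp (-t) ^ 2) * Real.sinh x ^ 2) := by
  have hy := shrink_sq_lt_one ht x
  have hcp := Real.cosh_pos x
  have key : 1 - (Real.exp (-t) * Real.tanh x) ^ 2
      = (1 + (1 - Real.exp (-t) ^ 2) * Real.sinh x ^ 2) / Real.cosh x ^ 2 := by
    rw [Real.tanh_eq_sinh_div_cosh]
    field_simp
    nlinarith [Real.cosh_sq x]
  rw [shrink, cosh_artanh hy, key,
    Real.sqrt_div (one_add_k_mul_sq_pos ht _).le,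
    Real.sqrt_sq hcp.le, one_div_div]

lemma sinh_shrink (ht : 0 ≤ t) (x : ℝ) :
    Real.sinh (shrink t x) =
      Real.exp (-t) * Real.sinh x / Real.sqrt (1 + (1 - Real.exp (-t) ^ 2) * Real.sinh x ^ 2) := by
  have hy := shrink_sq_lt_one ht x
  have hcp := Real.cosh_pos x
  rw [shrink, sinh_artanh hy, ← shrink, cosh_shrink ht x, Real.tanh_eq_sinh_div_cosh]
  field_simp

lemma cosh_htOf (h₀ σ : ℝ) :
    Real.cosh (htOf h₀ σ) = Real.sqrt (1 + Real.sinh h₀ ^ 2 * Real.cosh σ ^ 2) := by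
  rw [htOf, Real.cosh_arsinh]; congr 1; ring

lemma sinh_htOf (h₀ σ : ℝ) : Real.sinh (htOf h₀ σ) = Real.cosh σ * Real.sinh h₀ :=
  Real.sinh_arsinh _

lemma sinh_ftOf (h₀ σ : ℝ) :
    Real.sinh (ftOf h₀ σ) = Real.sinh σ / Real.sqrt (1 + Real.sinh h₀ ^ 2 * Real.cosh σ ^ 2) := by
  rw [ftOf, Real.sinh_arsinh, cosh_htOf]

lemma cosh_ftOf (h₀ σ : ℝ) :
    Real.cosh (ftOf h₀ σ) = Real.cosh σ * Real.cosh h₀ /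
      Real.sqrt (1 + Real.sinh h₀ ^ 2 * Real.cosh σ ^ 2) := by
  have hQ : (0:ℝ) < 1 + Real.sinh h₀ ^ 2 * Real.cosh σ ^ 2 := by positivity
  have hQ2 : Real.sqrt (1 + Real.sinh h₀ ^ 2 * Real.cosh σ ^ 2) ^ 2
      = 1 + Real.sinh h₀ ^ 2 * Real.cosh σ ^ 2 := Real.sq_sqrt hQ.le
  have hQp : 0 < Real.sqrt (1 + Real.sinh h₀ ^ 2 * Real.cosh σ ^ 2) := Real.sqrt_pos.mpr hQ
  rw [ftOf, Real.cosh_arsinh, cosh_htOf]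
  apply sq_eq_of_nonneg (Real.sqrt_nonneg _) (by positivity)
  rw [Real.sq_sqrt (by positivity)]
  field_simp
  nlinarith [Real.cosh_sq σ, Real.cosh_sq h₀, hQ2]

/-- The arclength parameter on the image line of the homothety. -/
noncomputable def Phi (t h₀ σ : ℝ) : ℝ :=
  Real.arsinh (Real.sinh σ /
    Real.sqrt (1 + (1 - Real.exp (-t) ^ 2) * Real.sinh h₀ ^ 2 * Real.cosh σ ^ 2))

lemma cosh_Phi {t : ℝ} (ht : 0 ≤ t) (h₀ σ : ℝ) :
    Real.cosh (Phi t h₀ σ) =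
      Real.cosh σ * Real.sqrt (1 + (1 - Real.exp (-t) ^ 2) * Real.sinh h₀ ^ 2) /
        Real.sqrt (1 + (1 - Real.exp (-t) ^ 2) * Real.sinh h₀ ^ 2 * Real.cosh σ ^ 2) := by
  have hk := k_nonneg ht
  set k := 1 - Real.exp (-t) ^ 2 with hkdef
  have hu : (0:ℝ) < 1 + (1 - Real.exp (-t) ^ 2) * Real.sinh h₀ ^ 2 * Real.cosh σ ^ 2 := by
    have := one_add_k_mul_sq_pos ht (Real.sinh h₀ * Real.cosh σ)
    nlinarith
  have hr : (0:ℝ) < 1 + (1 - Real.exp (-t) ^ 2) * Real.sinh h₀ ^ 2 := by nlinarith [sq_nonneg (Real.sinh h₀)]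
  have hD : 0 < Real.sqrt (1 + (1 - Real.exp (-t) ^ 2) * Real.sinh h₀ ^ 2 * Real.cosh σ ^ 2) := Real.sqrt_pos.mpr hu
  have hD2 := Real.sq_sqrt hu.le
  have hr2 := Real.sq_sqrt hr.le
  rw [Phi, Real.cosh_arsinh]
  apply sq_eq_of_nonneg (Real.sqrt_nonneg _) (by positivity)
  rw [Real.sq_sqrt (by positivity)]
  rw [div_pow, div_pow, mul_pow, hD2, hr2, eq_div_iff hu.ne', add_mul, div_mul_cancel₀ _ hu.ne']
  linear_combination -(Real.cosh_sq σ)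

lemma sinh_Phi (t h₀ σ : ℝ) :
    Real.sinh (Phi t h₀ σ) = Real.sinh σ /
      Real.sqrt (1 + (1 - Real.exp (-t) ^ 2) * Real.sinh h₀ ^ 2 * Real.cosh σ ^ 2) := by
  rw [Phi, Real.sinh_arsinh]

lemma lPrime_eq {t : ℝ} (ht : 0 ≤ t) (h₀ σ₁ σ₂ : ℝ) :
    lPrime t h₀ σ₁ σ₂ = |Phi t h₀ σ₁ - Phi t h₀ σ₂| := by
  have hk := k_nonneg ht
  have key : mink (Pt (ftOf h₀ σ₁) (shrink t (htOf h₀ σ₁)))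
      (Pt (ftOf h₀ σ₂) (shrink t (htOf h₀ σ₂))) =
      Real.cosh (Phi t h₀ σ₁ - Phi t h₀ σ₂) := by
    have e1 : ∀ σ : ℝ, 1 + (1 - Real.exp (-t) ^ 2) * Real.sinh (htOf h₀ σ) ^ 2
        = 1 + (1 - Real.exp (-t) ^ 2) * Real.sinh h₀ ^ 2 * Real.cosh σ ^ 2 := by
      intro σ; rw [sinh_htOf]; ring
    have hQ : ∀ σ : ℝ, (0:ℝ) < Real.sqrt (1 + Real.sinh h₀ ^ 2 * Real.cosh σ ^ 2) := by
      intro σ; exact Real.sqrt_pos.mpr (by positivity)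
    have hD : ∀ σ : ℝ, (0:ℝ) < Real.sqrt (1 + (1 - Real.exp (-t) ^ 2) * Real.sinh h₀ ^ 2 * Real.cosh σ ^ 2) := by
      intro σ
      apply Real.sqrt_pos.mpr
      nlinarith [one_add_k_mul_sq_pos ht (Real.sinh h₀ * Real.cosh σ)]
    have hr : (0:ℝ) < 1 + (1 - Real.exp (-t) ^ 2) * Real.sinh h₀ ^ 2 := by nlinarith [sq_nonneg (Real.sinh h₀)]
    have hrs : 0 < Real.sqrt (1 + (1 - Real.exp (-t) ^ 2) * Real.sinh h₀ ^ 2) := Real.sqrt_pos.mpr hr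
    have hrs2 := Real.sq_sqrt hr.le
    have hQ2 : ∀ σ : ℝ, Real.sqrt (1 + Real.sinh h₀ ^ 2 * Real.cosh σ ^ 2) ^ 2
        = 1 + Real.sinh h₀ ^ 2 * Real.cosh σ ^ 2 := fun σ => Real.sq_sqrt (by positivity)
    have hD2 : ∀ σ : ℝ, Real.sqrt (1 + (1 - Real.exp (-t) ^ 2) * Real.sinh h₀ ^ 2 * Real.cosh σ ^ 2) ^ 2
        = 1 + (1 - Real.exp (-t) ^ 2) * Real.sinh h₀ ^ 2 * Real.cosh σ ^ 2 := by
      intro σ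
      apply Real.sq_sqrt
      nlinarith [one_add_k_mul_sq_pos ht (Real.sinh h₀ * Real.cosh σ)]
    have e2 : ∀ σ : ℝ, (1:ℝ) + (1 - Real.exp (-t) ^ 2) * (Real.cosh σ * Real.sinh h₀) ^ 2
        = 1 + (1 - Real.exp (-t) ^ 2) * Real.sinh h₀ ^ 2 * Real.cosh σ ^ 2 := by
      intro σ; ring
    simp only [mink, Pt, Real.cosh_sub, cosh_Phi ht, sinh_Phi,
      cosh_shrink ht, sinh_shrink ht, cosh_ftOf, sinh_ftOf, cosh_htOf, sinh_htOf, e2]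
    have h01 := hQ σ₁; have h02 := hQ σ₂; have h11 := hD σ₁; have h12 := hD σ₂
    field_simp
    have hrs2' : Real.sqrt (1 + Real.sinh h₀ ^ 2 - Real.sinh h₀ ^ 2 * Real.exp (-t) ^ 2) ^ 2
        = 1 + Real.sinh h₀ ^ 2 - Real.sinh h₀ ^ 2 * Real.exp (-t) ^ 2 := by
      apply Real.sq_sqrt; nlinarith [sq_nonneg (Real.sinh h₀)]
    ring_nf
    linear_combination (-(Real.cosh σ₁ * Real.cosh σ₂)) * hrs2' +
      (Real.cosh σ₁ * Real.cosh σ₂) * Real.cosh_sq h₀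
  rw [lPrime, hdist, key, _root_.arcosh_cosh]

lemma hasDerivAt_Phi {t : ℝ} (ht : 0 ≤ t) (h₀ σ : ℝ) :
    HasDerivAt (fun x => Phi t h₀ x)
      (Real.sqrt (1 + (1 - Real.exp (-t) ^ 2) * Real.sinh h₀ ^ 2) /
        (1 + (1 - Real.exp (-t) ^ 2) * Real.sinh h₀ ^ 2 * Real.cosh σ ^ 2)) σ := by
  have hk : 0 ≤ (1 - Real.exp (-t) ^ 2) * Real.sinh h₀ ^ 2 :=
    mul_nonneg (k_nonneg ht) (sq_nonneg _)
  set k' : ℝ := (1 - Real.exp (-t) ^ 2) * Real.sinh h₀ ^ 2 with hk'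
  have hu : ∀ x : ℝ, (0:ℝ) < 1 + k' * Real.cosh x ^ 2 := by
    intro x; nlinarith [sq_nonneg (Real.cosh x)]
  have hu0 := hu σ
  have hsu : 0 < Real.sqrt (1 + k' * Real.cosh σ ^ 2) := Real.sqrt_pos.mpr hu0
  have hsu2 : Real.sqrt (1 + k' * Real.cosh σ ^ 2) ^ 2 = 1 + k' * Real.cosh σ ^ 2 :=
    Real.sq_sqrt hu0.le
  have hr : (0:ℝ) < 1 + k' := by nlinarith
  have hrs : 0 < Real.sqrt (1 + k') := Real.sqrt_pos.mpr hr
  have hrs2 : Real.sqrt (1 + k') ^ 2 = 1 + k' := Real.sq_sqrt hr.le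
  -- derivative of inner polynomial
  have h1 : HasDerivAt (fun x : ℝ => 1 + k' * Real.cosh x ^ 2)
      (k' * (2 * Real.cosh σ * Real.sinh σ)) σ := by
    have := ((Real.hasDerivAt_cosh σ).pow 2).const_mul k'
    simpa [mul_comm, mul_assoc, mul_left_comm] using this.const_add 1
  have h2 : HasDerivAt (fun x : ℝ => Real.sqrt (1 + k' * Real.cosh x ^ 2))
      (1 / (2 * Real.sqrt (1 + k' * Real.cosh σ ^ 2)) * (k' * (2 * Real.cosh σ * Real.sinh σ))) σ :=
    (Real.hasDerivAt_sqrt hu0.ne').comp σ h1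
  have h3 : HasDerivAt (fun x : ℝ => Real.sinh x / Real.sqrt (1 + k' * Real.cosh x ^ 2))
      ((Real.cosh σ * Real.sqrt (1 + k' * Real.cosh σ ^ 2) -
        Real.sinh σ * (1 / (2 * Real.sqrt (1 + k' * Real.cosh σ ^ 2)) *
          (k' * (2 * Real.cosh σ * Real.sinh σ)))) / Real.sqrt (1 + k' * Real.cosh σ ^ 2) ^ 2) σ :=
    (Real.hasDerivAt_sinh σ).div h2 hsu.ne'
  have h4 := (Real.hasDerivAt_arsinh _).comp σ h3
  have hval : Real.sqrt (1 + (Real.sinh σ / Real.sqrt (1 + k' * Real.cosh σ ^ 2)) ^ 2)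
      = Real.cosh σ * Real.sqrt (1 + k') / Real.sqrt (1 + k' * Real.cosh σ ^ 2) := by
    apply sq_eq_of_nonneg (Real.sqrt_nonneg _) (by positivity)
    rw [Real.sq_sqrt (by positivity)]
    rw [div_pow, div_pow, mul_pow, hsu2, hrs2, eq_div_iff hu0.ne', add_mul, div_mul_cancel₀ _ hu0.ne']
    linear_combination -(Real.cosh_sq σ)
  have heq : (Real.sqrt (1 + (Real.sinh σ / Real.sqrt (1 + k' * Real.cosh σ ^ 2)) ^ 2))⁻¹ *
      ((Real.cosh σ * Real.sqrt (1 + k' * Real.cosh σ ^ 2) -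
        Real.sinh σ * (1 / (2 * Real.sqrt (1 + k' * Real.cosh σ ^ 2)) *
          (k' * (2 * Real.cosh σ * Real.sinh σ)))) / Real.sqrt (1 + k' * Real.cosh σ ^ 2) ^ 2)
      = Real.sqrt (1 + k') / (1 + k' * Real.cosh σ ^ 2) := by
    rw [hval]
    have hcσ := Real.cosh_pos σ
    have e3 : Real.sinh σ * (1 / (2 * Real.sqrt (1 + k' * Real.cosh σ ^ 2)) *
        (k' * (2 * Real.cosh σ * Real.sinh σ)))
        = k' * Real.cosh σ * Real.sinh σ ^ 2 / Real.sqrt (1 + k' * Real.cosh σ ^ 2) := by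
      field_simp
    have hsu2' : Real.sqrt (1 + Real.cosh σ ^ 2 * k') ^ 2 = 1 + Real.cosh σ ^ 2 * k' :=
      Real.sq_sqrt (by nlinarith [hu0])
    rw [e3]
    field_simp
    linear_combination (k' * Real.cosh σ ^ 2 - k') * hsu2' -
      Real.sqrt (1 + Real.cosh σ ^ 2 * k') ^ 2 * hrs2 +
      (1 + Real.cosh σ ^ 2 * k') * k' * Real.cosh_sq σ
  rw [heq] at h4
  exact h4.congr_deriv rfl |>.congr_of_eventuallyEq (by
    filter_upwards with x
    simp [Phi, Function.comp, hk'])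

lemma rat_comm (t h₀ σ₁ σ₂ : ℝ) : rat t h₀ σ₁ σ₂ = rat t h₀ σ₂ σ₁ := by
  have : ∀ p q, hdist p q = hdist q p := by
    intro p q; rw [hdist, hdist]; congr 1; rw [mink, mink]; ring
  rw [rat, rat, lPrime, lPrime, this, abs_sub_comm]

lemma rat_bounds_ordered {t M : ℝ} (ht : 0 ≤ t) (hM : 0 < M) (h₀ σ₁ σ₂ : ℝ)
    (hS₀ : 0 ≤ Real.sinh h₀)
    (hb1 : Real.cosh σ₁ * Real.sinh h₀ ≤ Real.sinh M)
    (hb2 : Real.cosh σ₂ * Real.sinh h₀ ≤ Real.sinh M)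
    (hlt : σ₁ < σ₂) :
    1 ≤ rat t h₀ σ₁ σ₂ ∧
      rat t h₀ σ₁ σ₂ ≤ 1 + (1 - Real.exp (-t) ^ 2) * Real.sinh M ^ 2 := by
  have hk := k_nonneg ht
  set k : ℝ := 1 - Real.exp (-t) ^ 2 with hkdef
  have hsM : 0 ≤ Real.sinh M := Real.sinh_nonneg_iff.mpr hM.le
  set kM : ℝ := k * Real.sinh M ^ 2 with hkM
  have hkM0 : 0 ≤ kM := mul_nonneg hk (sq_nonneg _)
  -- derivative facts
  have hderiv : ∀ x : ℝ, HasDerivAt (fun y => Phi t h₀ y)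
      (Real.sqrt (1 + k * Real.sinh h₀ ^ 2) /
        (1 + k * Real.sinh h₀ ^ 2 * Real.cosh x ^ 2)) x := fun x => hasDerivAt_Phi ht h₀ x
  have hr : (0:ℝ) < 1 + k * Real.sinh h₀ ^ 2 := by nlinarith [sq_nonneg (Real.sinh h₀)]
  have hrs2 := Real.sq_sqrt hr.le
  have hrs0 := Real.sqrt_nonneg (1 + k * Real.sinh h₀ ^ 2)
  have hr1 : 1 ≤ Real.sqrt (1 + k * Real.sinh h₀ ^ 2) := by
    nlinarith [sq_nonneg (Real.sinh h₀), hrs2]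
  have hrle : Real.sqrt (1 + k * Real.sinh h₀ ^ 2) ≤ 1 + k * Real.sinh h₀ ^ 2 := by
    nlinarith [hrs2]
  have hcont : ContinuousOn (fun y => Phi t h₀ y) (Set.Icc σ₁ σ₂) :=
    fun x _ => ((hderiv x).differentiableAt.continuousAt).continuousWithinAt
  have hdiff : DifferentiableOn ℝ (fun y => Phi t h₀ y) (interior (Set.Icc σ₁ σ₂)) :=
    fun x _ => ((hderiv x).differentiableAt).differentiableWithinAt
  -- pointwise bounds on interval
  have hbnd : ∀ x ∈ Set.Icc σ₁ σ₂,
      k * Real.sinh h₀ ^ 2 * Real.cosh x ^ 2 ≤ kM := by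
    intro x hx
    have hcx : Real.cosh x * Real.sinh h₀ ≤ Real.sinh M := by
      rcases le_total |σ₁| |σ₂| with hc | hc
      · have h1 : Real.cosh x ≤ Real.cosh σ₂ := by
          rw [Real.cosh_le_cosh]
          exact abs_le.mpr ⟨by linarith [neg_abs_le σ₁, hx.1], by linarith [le_abs_self σ₂, hx.2]⟩
        calc Real.cosh x * Real.sinh h₀ ≤ Real.cosh σ₂ * Real.sinh h₀ :=
              mul_le_mul_of_nonneg_right h1 hS₀
          _ ≤ Real.sinh M := hb2
      · have h1 : Real.cosh x ≤ Real.cosh σ₁ := by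
          rw [Real.cosh_le_cosh]
          exact abs_le.mpr ⟨by linarith [neg_abs_le σ₁, hx.1], by linarith [le_abs_self σ₂, hx.2]⟩
        calc Real.cosh x * Real.sinh h₀ ≤ Real.cosh σ₁ * Real.sinh h₀ :=
              mul_le_mul_of_nonneg_right h1 hS₀
          _ ≤ Real.sinh M := hb1
    have h0 : 0 ≤ Real.cosh x * Real.sinh h₀ := mul_nonneg (Real.cosh_pos x).le hS₀
    have : (Real.cosh x * Real.sinh h₀) ^ 2 ≤ Real.sinh M ^ 2 := by nlinarith
    calc k * Real.sinh h₀ ^ 2 * Real.cosh x ^ 2 = k * (Real.cosh x * Real.sinh h₀) ^ 2 := by ring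
      _ ≤ k * Real.sinh M ^ 2 := by nlinarith
  -- upper derivative bound : deriv ≤ 1
  have hup : Phi t h₀ σ₂ - Phi t h₀ σ₁ ≤ 1 * (σ₂ - σ₁) := by
    apply Convex.image_sub_le_mul_sub_of_deriv_le (convex_Icc σ₁ σ₂) hcont hdiff
      (C := 1) ?_ σ₁ (Set.left_mem_Icc.mpr hlt.le) σ₂ (Set.right_mem_Icc.mpr hlt.le) hlt.le
    intro x hx
    rw [(hderiv x).deriv]
    have hu : (0:ℝ) < 1 + k * Real.sinh h₀ ^ 2 * Real.cosh x ^ 2 := by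
      nlinarith [sq_nonneg (Real.cosh x), sq_nonneg (Real.sinh h₀),
        mul_nonneg (mul_nonneg hk (sq_nonneg (Real.sinh h₀))) (sq_nonneg (Real.cosh x))]
    rw [div_le_one hu]
    nlinarith [hrle, mul_nonneg (mul_nonneg hk (sq_nonneg (Real.sinh h₀)))
      (by nlinarith [Real.one_le_cosh x] : (0:ℝ) ≤ Real.cosh x ^ 2 - 1)]
  -- lower derivative bound : deriv ≥ 1/(1+kM)
  have hlow : (1 / (1 + kM)) * (σ₂ - σ₁) ≤ Phi t h₀ σ₂ - Phi t h₀ σ₁ := by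
    apply Convex.mul_sub_le_image_sub_of_le_deriv (convex_Icc σ₁ σ₂) hcont hdiff
      ?_ σ₁ (Set.left_mem_Icc.mpr hlt.le) σ₂ (Set.right_mem_Icc.mpr hlt.le) hlt.le
    intro x hx
    rw [(hderiv x).deriv]
    have hx' : x ∈ Set.Icc σ₁ σ₂ := interior_subset hx
    have hb := hbnd x hx'
    have hu : (0:ℝ) < 1 + k * Real.sinh h₀ ^ 2 * Real.cosh x ^ 2 := by
      nlinarith [mul_nonneg (mul_nonneg hk (sq_nonneg (Real.sinh h₀))) (sq_nonneg (Real.cosh x))]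
    rw [div_le_div_iff₀ (by positivity) hu]
    nlinarith [hr1, hb, hkM0]
  have hpos : 0 < Phi t h₀ σ₂ - Phi t h₀ σ₁ := by
    have : 0 < (1 / (1 + kM)) * (σ₂ - σ₁) := by
      apply mul_pos (by positivity) (by linarith)
    linarith
  have hrat : rat t h₀ σ₁ σ₂ = (σ₂ - σ₁) / (Phi t h₀ σ₂ - Phi t h₀ σ₁) := by
    rw [rat, lPrime_eq ht, abs_sub_comm σ₁ σ₂, abs_of_pos (by linarith : (0:ℝ) < σ₂ - σ₁),
      abs_sub_comm (Phi t h₀ σ₁) (Phi t h₀ σ₂), abs_of_pos hpos]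
  constructor
  · rw [hrat, le_div_iff₀ hpos]; linarith
  · rw [hrat, div_le_iff₀ hpos]
    have h1c : (1 + kM) * ((1 / (1 + kM)) * (σ₂ - σ₁)) = σ₂ - σ₁ := by
      field_simp
    nlinarith [hlow, hkM0, hpos]

/-- Consider pairs of ultraparallel trapezoids `A₁A₂B₁B₂`, `A₁'A₂'B₁B₂` over the same lower
edge, with `tanh hᵢ' = e^{-t} tanh hᵢ`; `h₀` is the distance between the lines `A₁A₂` and
`B₁B₂`, and `h₀ ≥ m`, `h₁, h₂ ≤ M` for fixed `0 < m < M`.  Then as `t → 0` the ratio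
`l₁₂ / l₁₂'` tends to `1` uniformly over all such pairs; moreover for fixed `t` the ratio
extends continuously to the degenerate trapezoids `a₁₂ → 0`, with limit
`cosh²h₁ · cosh h₀' / (cosh²h₁' · cosh h₀)`. -/
theorem trapezoid_homothety_ratio (m M : ℝ) (hm : 0 < m) (hmM : m < M) :
    (∀ ε > 0, ∃ δ > 0, ∀ t, 0 < t → t < δ → ∀ h₀ σ₁ σ₂ : ℝ,
      m ≤ h₀ → htOf h₀ σ₁ ≤ M → htOf h₀ σ₂ ≤ M → σ₁ ≠ σ₂ →
      |rat t h₀ σ₁ σ₂ - 1| < ε) ∧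
    (∀ t > (0 : ℝ), ∀ h₀ σ₁ : ℝ, m ≤ h₀ → htOf h₀ σ₁ ≤ M →
      Filter.Tendsto (fun σ₂ => rat t h₀ σ₁ σ₂) (nhdsWithin σ₁ {σ₁}ᶜ)
        (nhds (Real.cosh (htOf h₀ σ₁) ^ 2 * Real.cosh (shrink t h₀) /
          (Real.cosh (shrink t (htOf h₀ σ₁)) ^ 2 * Real.cosh h₀)))) := by
  constructor
  · -- Part 1: uniform convergence of the ratio to 1 as t → 0
    intro ε hε
    refine ⟨ε / (2 * Real.sinh M ^ 2 + 1), by positivity, ?_⟩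
    intro t ht htδ h₀ σ₁ σ₂ hmh hM1 hM2 hne
    have htn : (0:ℝ) ≤ t := ht.le
    have hM0 : 0 < M := lt_trans hm hmM
    have hS₀ : 0 ≤ Real.sinh h₀ := Real.sinh_nonneg_iff.mpr (by linarith)
    have hb1 : Real.cosh σ₁ * Real.sinh h₀ ≤ Real.sinh M := by
      rw [← sinh_htOf h₀ σ₁]; exact Real.sinh_le_sinh.mpr hM1
    have hb2 : Real.cosh σ₂ * Real.sinh h₀ ≤ Real.sinh M := by
      rw [← sinh_htOf h₀ σ₂]; exact Real.sinh_le_sinh.mpr hM2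
    have key : 1 ≤ rat t h₀ σ₁ σ₂ ∧
        rat t h₀ σ₁ σ₂ ≤ 1 + (1 - Real.exp (-t) ^ 2) * Real.sinh M ^ 2 := by
      rcases hne.lt_or_gt with h | h
      · exact rat_bounds_ordered htn hM0 h₀ σ₁ σ₂ hS₀ hb1 hb2 h
      · rw [rat_comm]; exact rat_bounds_ordered htn hM0 h₀ σ₂ σ₁ hS₀ hb2 hb1 h
    have hk2t : 1 - Real.exp (-t) ^ 2 ≤ 2 * t := by
      have he : Real.exp (-t) ^ 2 = Real.exp (-(2 * t)) := by
        rw [sq, ← Real.exp_add]; ring_nf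
      rw [he]
      nlinarith [Real.add_one_le_exp (-(2 * t))]
    have h3 : t * (2 * Real.sinh M ^ 2 + 1) < ε := by
      rw [← lt_div_iff₀ (by positivity)]; exact htδ
    rw [abs_of_nonneg (by linarith [key.1] : (0:ℝ) ≤ rat t h₀ σ₁ σ₂ - 1)]
    nlinarith [key.2, hk2t, sq_nonneg (Real.sinh M), ht, h3,
      mul_nonneg (by linarith : (0:ℝ) ≤ 2 * t - (1 - Real.exp (-t) ^ 2)) (sq_nonneg (Real.sinh M))]
  · -- Part 2: the degenerate limit a₁₂ → 0
    intro t ht h₀ σ₁ hmh hM1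
    have htn : (0:ℝ) ≤ t := ht.le
    have hk := k_nonneg htn
    have hu : (0:ℝ) < 1 + (1 - Real.exp (-t) ^ 2) * Real.sinh h₀ ^ 2 * Real.cosh σ₁ ^ 2 := by
      nlinarith [mul_nonneg (mul_nonneg hk (sq_nonneg (Real.sinh h₀))) (sq_nonneg (Real.cosh σ₁))]
    have hr : (0:ℝ) < 1 + (1 - Real.exp (-t) ^ 2) * Real.sinh h₀ ^ 2 := by
      nlinarith [mul_nonneg hk (sq_nonneg (Real.sinh h₀))]
    have hrs : 0 < Real.sqrt (1 + (1 - Real.exp (-t) ^ 2) * Real.sinh h₀ ^ 2) :=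
      Real.sqrt_pos.mpr hr
    set d : ℝ := Real.sqrt (1 + (1 - Real.exp (-t) ^ 2) * Real.sinh h₀ ^ 2) /
        (1 + (1 - Real.exp (-t) ^ 2) * Real.sinh h₀ ^ 2 * Real.cosh σ₁ ^ 2) with hd
    have hdpos : 0 < d := by positivity
    have hslope := hasDerivAt_iff_tendsto_slope.mp (hasDerivAt_Phi htn h₀ σ₁)
    have h2 : Filter.Tendsto (fun σ₂ => |slope (fun x => Phi t h₀ x) σ₁ σ₂|⁻¹)
        (nhdsWithin σ₁ {σ₁}ᶜ) (nhds |d|⁻¹) :=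
      hslope.abs.inv₀ (by positivity)
    have hfun : ∀ σ₂ : ℝ, rat t h₀ σ₁ σ₂ = |slope (fun x => Phi t h₀ x) σ₁ σ₂|⁻¹ := by
      intro σ₂
      rw [rat, lPrime_eq htn, slope_def_field, abs_div, inv_div,
        abs_sub_comm σ₂ σ₁, abs_sub_comm (Phi t h₀ σ₂) (Phi t h₀ σ₁)]
    have hval : Real.cosh (htOf h₀ σ₁) ^ 2 * Real.cosh (shrink t h₀) /
        (Real.cosh (shrink t (htOf h₀ σ₁)) ^ 2 * Real.cosh h₀) = |d|⁻¹ := by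
      rw [abs_of_pos hdpos, hd]
      rw [cosh_shrink htn, cosh_shrink htn, cosh_htOf, sinh_htOf]
      have hQ : (0:ℝ) < 1 + Real.sinh h₀ ^ 2 * Real.cosh σ₁ ^ 2 := by positivity
      have hQ2 := Real.sq_sqrt hQ.le
      have hB : (0:ℝ) < 1 + (1 - Real.exp (-t) ^ 2) * (Real.cosh σ₁ * Real.sinh h₀) ^ 2 := by
        nlinarith [mul_nonneg hk (sq_nonneg (Real.cosh σ₁ * Real.sinh h₀))]
      have hB2 := Real.sq_sqrt hB.le
      have hBs := Real.sqrt_pos.mpr hB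
      have hQs := Real.sqrt_pos.mpr hQ
      have hrs2 := Real.sq_sqrt hr.le
      have hc0 := Real.cosh_pos h₀
      rw [inv_div]
      field_simp
      ring_nf
      exact Real.sq_sqrt (by nlinarith [hB])
    rw [hval]
    exact h2.congr (fun σ₂ => (hfun σ₂).symm)
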